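/- arXiv:1503.03253 — 2 statements merged into one kernel-verified Lean document; each statement's English description precedes it below -/
import Mathlib

section
/- For a fixed integer r ≥ 0 and α = (α_0, ..., α_r) with all α_i ≥ 0, if ψ_j(α) < ψ_{j+1}(α) for some j ≥ 0 (with j+1 ≤ r), then ψ_j(α) < ψ_{j+1}(α) < ψ_{j+2}(α) < ... < ψ_r(α), i.e., the sequence is strictly increasing from index j onward. -/
/-- `ψ_k(α) = Σ_{i=0}^r C(k,i) α_i` (with `C(k,i)=0` for `i>k`). -/
noncomputable def psi (r : ℕ) (α : ℕ → ℝ) (k : ℕ) : ℝ :=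
  ∑ i ∈ Finset.range (r + 1), (k.choose i : ℝ) * α i

lemma psi_diff (r : ℕ) (α : ℕ → ℝ) (k : ℕ) :
    psi r α (k + 1) - psi r α k = ∑ i ∈ Finset.range r, (k.choose i : ℝ) * α (i + 1) := by
  unfold psi
  rw [← Finset.sum_sub_distrib, Finset.sum_range_succ']
  simp [Nat.choose_succ_succ, add_mul, mul_comm]
  rw [← Finset.sum_sub_distrib]
  congr 1; ext x; ring

lemma psi_diff_mono (r : ℕ) (α : ℕ → ℝ) (hα : ∀ i, 0 ≤ α i) {k l : ℕ} (hkl : k ≤ l) :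
    psi r α (k + 1) - psi r α k ≤ psi r α (l + 1) - psi r α l := by
  rw [psi_diff, psi_diff]
  apply Finset.sum_le_sum
  intro i _
  exact mul_le_mul_of_nonneg_right (by exact_mod_cast Nat.choose_le_choose i hkl) (hα _)

/-- if `ψ_j(α) < ψ_{j+1}(α)` for some `j` with `j+1 ≤ r`, then the
sequence `ψ_j(α) < ψ_{j+1}(α) < … < ψ_r(α)` is strictly increasing from `j` on. -/
theorem psi_strict_from (r : ℕ) (α : ℕ → ℝ) (hα : ∀ i, 0 ≤ α i)
    (j : ℕ) (hj : j + 1 ≤ r) (h : psi r α j < psi r α (j + 1)) :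
    ∀ a b : ℕ, j ≤ a → a < b → b ≤ r → psi r α a < psi r α b := by
  have step : ∀ k, j ≤ k → psi r α k < psi r α (k + 1) := by
    intro k hk
    have := psi_diff_mono r α hα hk
    linarith
  intro a b ha hab hb
  clear hb hj h
  induction b with
  | zero => omega
  | succ n ih =>
    rcases Nat.lt_or_ge a n with h' | h'
    · exact lt_trans (ih h') (step n (by omega))
    · have : a = n := by omega
      subst this
      exact step a ha
end

section
/- The function P_{r,𝔭}(Y) = Π_{i=0}^r p_i^{f_i(Y)} · Π_{i=0}^r (1-p_i)^{e_i(Y)} is a probability function on Ω_n^r, i.e., Σ_{Y ∈ Ω_n^r} P_{r,𝔭}(Y) = 1. -/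
open Finset Classical

attribute [local instance] Classical.propDecidable

/-- `Y` is a simplicial subcomplex of the simplex `Δ_n` on vertex set `Fin n`:
faces are nonempty vertex sets, closed under passing to nonempty subsets. -/
def IsComplex {n : ℕ} (Y : Finset (Finset (Fin n))) : Prop :=
  ∀ σ ∈ Y, σ.Nonempty ∧ ∀ τ ⊆ σ, τ.Nonempty → τ ∈ Y

/-- `f_i(Y)`: the number of `i`-dimensional faces of `Y`. -/
def fcount {n : ℕ} (Y : Finset (Finset (Fin n))) (i : ℕ) : ℕ :=
  (Y.filter fun σ => σ.card = i + 1).card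

/-- `σ` is an external face of `Y`: `σ ⊄ Y` but `∂σ ⊂ Y`. -/
def IsExternal {n : ℕ} (Y : Finset (Finset (Fin n))) (σ : Finset (Fin n)) : Prop :=
  σ.Nonempty ∧ σ ∉ Y ∧ ∀ τ ⊂ σ, τ.Nonempty → τ ∈ Y

/-- `e_i(Y)`: the number of `i`-dimensional external faces of `Y`. -/
noncomputable def ecount {n : ℕ} (Y : Finset (Finset (Fin n))) (i : ℕ) : ℕ :=
  (Finset.univ.filter fun σ : Finset (Fin n) =>
    σ.card = i + 1 ∧ IsExternal Y σ).card

/-- `P_{r,𝔭}(Y) = Π_{i≤r} p_i^{f_i(Y)} (1-p_i)^{e_i(Y)}` (with `0^0 = 1`). -/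
noncomputable def Pfun {n : ℕ} (r : ℕ) (p : ℕ → ℝ) (Y : Finset (Finset (Fin n))) : ℝ :=
  (∏ i ∈ Finset.range (r + 1), p i ^ fcount Y i) *
    ∏ i ∈ Finset.range (r + 1), (1 - p i) ^ ecount Y i

/-- `Ω_n^r`: the collection of all subcomplexes of `Δ_n` of dimension `≤ r`. -/
noncomputable def Omega (n r : ℕ) : Finset (Finset (Finset (Fin n))) :=
  Finset.univ.filter fun Y => IsComplex Y ∧ ∀ σ ∈ Y, σ.card ≤ r + 1
/-! ### Auxiliary lemmas -/


lemma binom_sum {α : Type*} [DecidableEq α] (E : Finset α) (a : ℝ) :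
    ∑ T ∈ E.powerset, a ^ T.card * (1 - a) ^ (E.card - T.card) = 1 := by
  have h := Finset.prod_add (fun _ : α => a) (fun _ : α => 1 - a) E
  simp only [prod_const] at h
  calc ∑ T ∈ E.powerset, a ^ T.card * (1 - a) ^ (E.card - T.card)
      = ∑ T ∈ E.powerset, a ^ T.card * (1 - a) ^ (E \ T).card := by
        refine sum_congr rfl fun T hT => ?_
        rw [card_sdiff_of_subset (mem_powerset.mp hT)]
    _ = (a + (1 - a)) ^ E.card := h.symm
    _ = 1 := by norm_num

lemma mem_Omega {n r : ℕ} {Y : Finset (Finset (Fin n))} :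
    Y ∈ Omega n r ↔ IsComplex Y ∧ ∀ σ ∈ Y, σ.card ≤ r + 1 := by
  simp [Omega]

/-- Eligible `(r+1)`-dimensional simplices over a complex `Z`. -/
noncomputable def elig {n : ℕ} (r : ℕ) (Z : Finset (Finset (Fin n))) :
    Finset (Finset (Fin n)) :=
  Finset.univ.filter fun σ => σ.card = r + 2 ∧ ∀ τ ⊂ σ, τ.Nonempty → τ ∈ Z

lemma mem_elig {n r : ℕ} {Z : Finset (Finset (Fin n))} {σ : Finset (Fin n)} :
    σ ∈ elig r Z ↔ σ.card = r + 2 ∧ ∀ τ ⊂ σ, τ.Nonempty → τ ∈ Z := by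
  simp [elig]

section Step

variable {n r : ℕ} {Z T Y : Finset (Finset (Fin n))}

lemma card_le_of_mem_Omega (hZ : Z ∈ Omega n r) {σ : Finset (Fin n)} (hσ : σ ∈ Z) :
    σ.card ≤ r + 1 :=
  (mem_Omega.mp hZ).2 _ hσ

lemma card_of_mem_T (hT : T ⊆ elig r Z) {σ : Finset (Fin n)} (hσ : σ ∈ T) :
    σ.card = r + 2 := (mem_elig.mp (hT hσ)).1

lemma not_mem_Z_of_mem_T (hZ : Z ∈ Omega n r) (hT : T ⊆ elig r Z)
    {σ : Finset (Fin n)} (hσ : σ ∈ T) : σ ∉ Z := fun h => by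
  have h1 : σ.card ≤ r + 1 := card_le_of_mem_Omega hZ h
  have h2 : σ.card = r + 2 := card_of_mem_T hT hσ
  omega

lemma union_mem_Omega (hZ : Z ∈ Omega n r) (hT : T ⊆ elig r Z) :
    Z ∪ T ∈ Omega n (r + 1) := by
  obtain ⟨hc, hd⟩ := mem_Omega.mp hZ
  refine mem_Omega.mpr ⟨fun σ hσ => ?_, fun σ hσ => ?_⟩
  · rcases mem_union.mp hσ with h | h
    · obtain ⟨h1, h2⟩ := hc σ h
      exact ⟨h1, fun τ hτ hne => mem_union_left _ (h2 τ hτ hne)⟩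
    · obtain ⟨hcard, hbd⟩ := mem_elig.mp (hT h)
      refine ⟨card_pos.mp (by omega), fun τ hτ hne => ?_⟩
      rcases eq_or_ssubset_of_subset hτ with rfl | hss
      · exact mem_union_right _ h
      · exact mem_union_left _ (hbd τ hss hne)
  · rcases mem_union.mp hσ with h | h
    · exact le_trans (hd σ h) (by omega)
    · rw [card_of_mem_T hT h]

lemma skel_union (hZ : Z ∈ Omega n r) (hT : T ⊆ elig r Z) :
    (Z ∪ T).filter (fun σ => σ.card ≤ r + 1) = Z := by
  ext σ
  simp only [mem_filter, mem_union]
  constructor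
  · rintro ⟨h | h, hc⟩
    · exact h
    · rw [card_of_mem_T hT h] at hc; omega
  · intro h; exact ⟨Or.inl h, card_le_of_mem_Omega hZ h⟩

lemma top_union (hZ : Z ∈ Omega n r) (hT : T ⊆ elig r Z) :
    (Z ∪ T).filter (fun σ => σ.card = r + 2) = T := by
  ext σ
  simp only [mem_filter, mem_union]
  constructor
  · rintro ⟨h | h, hc⟩
    · have := card_le_of_mem_Omega hZ h; omega
    · exact h
  · intro h; exact ⟨Or.inr h, card_of_mem_T hT h⟩

lemma skel_mem_Omega (hY : Y ∈ Omega n (r + 1)) :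
    Y.filter (fun σ => σ.card ≤ r + 1) ∈ Omega n r := by
  obtain ⟨hc, _⟩ := mem_Omega.mp hY
  refine mem_Omega.mpr ⟨fun σ hσ => ?_, fun σ hσ => (mem_filter.mp hσ).2⟩
  obtain ⟨h1, h2⟩ := hc σ (mem_filter.mp hσ).1
  exact ⟨h1, fun τ hτ hne => mem_filter.mpr ⟨h2 τ hτ hne,
    le_trans (card_le_card hτ) (mem_filter.mp hσ).2⟩⟩

lemma top_subset_elig (hY : Y ∈ Omega n (r + 1)) :
    Y.filter (fun σ => σ.card = r + 2) ⊆ elig r (Y.filter (fun σ => σ.card ≤ r + 1)) := by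
  obtain ⟨hc, _⟩ := mem_Omega.mp hY
  intro σ hσ
  obtain ⟨hmem, hcard⟩ := mem_filter.mp hσ
  refine mem_elig.mpr ⟨hcard, fun τ hτ hne => mem_filter.mpr
    ⟨(hc σ hmem).2 τ hτ.subset hne, ?_⟩⟩
  have h3 : τ.card < σ.card := Finset.card_lt_card hτ
  omega

lemma skel_union_top (hY : Y ∈ Omega n (r + 1)) :
    Y.filter (fun σ => σ.card ≤ r + 1) ∪ Y.filter (fun σ => σ.card = r + 2) = Y := by
  obtain ⟨_, hd⟩ := mem_Omega.mp hY
  ext σ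
  simp only [mem_union, mem_filter]
  constructor
  · rintro (⟨h, _⟩ | ⟨h, _⟩) <;> exact h
  · intro h
    have := hd σ h
    by_cases hc : σ.card ≤ r + 1
    · exact Or.inl ⟨h, hc⟩
    · exact Or.inr ⟨h, by omega⟩

lemma fcount_union_lt (hZ : Z ∈ Omega n r) (hT : T ⊆ elig r Z) {i : ℕ} (hi : i ≤ r) :
    fcount (Z ∪ T) i = fcount Z i := by
  unfold fcount
  congr 1
  ext σ
  simp only [mem_filter, mem_union]
  constructor
  · rintro ⟨h | h, hc⟩
    · exact ⟨h, hc⟩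
    · rw [card_of_mem_T hT h] at hc; omega
  · rintro ⟨h, hc⟩; exact ⟨Or.inl h, hc⟩

lemma fcount_union_top (hZ : Z ∈ Omega n r) (hT : T ⊆ elig r Z) :
    fcount (Z ∪ T) (r + 1) = T.card := by
  unfold fcount
  congr 1
  exact top_union hZ hT

lemma ecount_union_lt (hZ : Z ∈ Omega n r) (hT : T ⊆ elig r Z) {i : ℕ} (hi : i ≤ r) :
    ecount (Z ∪ T) i = ecount Z i := by
  unfold ecount
  congr 1
  ext σ
  simp only [mem_filter, mem_univ, true_and]
  constructor
  · rintro ⟨hc, hne, hnm, hbd⟩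
    refine ⟨hc, hne, fun h => hnm (mem_union_left _ h), fun τ hτ hτne => ?_⟩
    rcases mem_union.mp (hbd τ hτ hτne) with h | h
    · exact h
    · exfalso
      have h1 := card_of_mem_T hT h
      have h2 := card_lt_card hτ
      omega
  · rintro ⟨hc, hne, hnm, hbd⟩
    refine ⟨hc, hne, fun h => ?_, fun τ hτ hτne => mem_union_left _ (hbd τ hτ hτne)⟩
    rcases mem_union.mp h with h' | h'
    · exact hnm h'
    · have := card_of_mem_T hT h'; omega

lemma ecount_union_top (hZ : Z ∈ Omega n r) (hT : T ⊆ elig r Z) :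
    ecount (Z ∪ T) (r + 1) = (elig r Z).card - T.card := by
  have key : (Finset.univ.filter fun σ : Finset (Fin n) =>
      σ.card = r + 2 ∧ IsExternal (Z ∪ T) σ) = elig r Z \ T := by
    ext σ
    simp only [mem_filter, mem_univ, true_and, mem_sdiff, mem_elig]
    constructor
    · rintro ⟨hc, hne, hnm, hbd⟩
      refine ⟨⟨hc, fun τ hτ hτne => ?_⟩, fun h => hnm (mem_union_right _ h)⟩
      rcases mem_union.mp (hbd τ hτ hτne) with h | h
      · exact h
      · have h1 := card_of_mem_T hT h
        have h2 := card_lt_card hτ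
        omega
    · rintro ⟨⟨hc, hbd⟩, hnT⟩
      refine ⟨hc, card_pos.mp (by omega), fun h => ?_,
        fun τ hτ hτne => mem_union_left _ (hbd τ hτ hτne)⟩
      rcases mem_union.mp h with h' | h'
      · have := card_le_of_mem_Omega hZ h'; omega
      · exact hnT h'
  rw [ecount, key, card_sdiff_of_subset hT]

lemma Pfun_union (p : ℕ → ℝ) (hZ : Z ∈ Omega n r) (hT : T ⊆ elig r Z) :
    Pfun (r + 1) p (Z ∪ T) =
      Pfun r p Z * (p (r + 1) ^ T.card *
        (1 - p (r + 1)) ^ ((elig r Z).card - T.card)) := by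
  have hf : ∏ i ∈ Finset.range (r + 1), p i ^ fcount (Z ∪ T) i =
      ∏ i ∈ Finset.range (r + 1), p i ^ fcount Z i :=
    Finset.prod_congr rfl fun i hi => by
      rw [fcount_union_lt hZ hT (Nat.lt_succ_iff.mp (Finset.mem_range.mp hi))]
  have he : ∏ i ∈ Finset.range (r + 1), (1 - p i) ^ ecount (Z ∪ T) i =
      ∏ i ∈ Finset.range (r + 1), (1 - p i) ^ ecount Z i :=
    Finset.prod_congr rfl fun i hi => by
      rw [ecount_union_lt hZ hT (Nat.lt_succ_iff.mp (Finset.mem_range.mp hi))]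
  unfold Pfun
  rw [Finset.prod_range_succ (fun i => p i ^ fcount (Z ∪ T) i),
    Finset.prod_range_succ (fun i => (1 - p i) ^ ecount (Z ∪ T) i),
    fcount_union_top hZ hT, ecount_union_top hZ hT, hf, he]
  ring

end Step

/-- Base case: `Ω_n^0` is the powerset of the set of singletons. -/
lemma Omega_zero_eq (n : ℕ) :
    Omega n 0 = (Finset.univ.filter fun σ : Finset (Fin n) => σ.card = 1).powerset := by
  ext Y
  simp only [mem_Omega, mem_powerset]
  constructor
  · rintro ⟨hc, hd⟩ σ hσ
    have h1 := (hc σ hσ).1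
    have h2 := hd σ hσ
    simp only [mem_filter, mem_univ, true_and]
    have := card_pos.mpr h1
    omega
  · intro h
    constructor
    · intro σ hσ
      have hc : σ.card = 1 := by simpa using h hσ
      refine ⟨card_pos.mp (by omega), fun τ hτ hne => ?_⟩
      have : τ = σ := Finset.eq_of_subset_of_card_le hτ (by
        have := card_pos.mpr hne; omega)
      rwa [this]
    · intro σ hσ
      have : σ.card = 1 := by simpa using h hσ
      omega

lemma sum_Omega_zero (n : ℕ) (p : ℕ → ℝ) :
    ∑ Y ∈ Omega n 0, Pfun 0 p Y = 1 := by
  set S := (Finset.univ.filter fun σ : Finset (Fin n) => σ.card = 1) with hS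
  have hfc : ∀ Y ∈ S.powerset, fcount Y 0 = Y.card := by
    intro Y hY
    unfold fcount
    congr 1
    rw [Finset.filter_true_of_mem]
    intro σ hσ
    have h := (mem_powerset.mp hY) hσ
    rw [hS] at h
    simpa using h
  have hec : ∀ Y ∈ S.powerset, ecount Y 0 = S.card - Y.card := by
    intro Y hY
    have key : (Finset.univ.filter fun σ : Finset (Fin n) =>
        σ.card = 0 + 1 ∧ IsExternal Y σ) = S \ Y := by
      ext σ
      rw [hS]
      simp only [mem_filter, mem_univ, true_and, mem_sdiff]
      constructor
      · rintro ⟨hc, _, hnm, _⟩; exact ⟨by simpa using hc, hnm⟩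
      · rintro ⟨hc, hnm⟩
        refine ⟨by omega, card_pos.mp (by omega), hnm, fun τ hτ hne => ?_⟩
        exfalso
        have h1 := card_lt_card hτ
        have h2 := card_pos.mpr hne
        omega
    rw [ecount, key, card_sdiff_of_subset (mem_powerset.mp hY)]
  rw [Omega_zero_eq, ← hS]
  calc ∑ Y ∈ S.powerset, Pfun 0 p Y
      = ∑ Y ∈ S.powerset, p 0 ^ Y.card * (1 - p 0) ^ (S.card - Y.card) := by
        refine sum_congr rfl fun Y hY => ?_
        unfold Pfun
        rw [Finset.prod_range_one, Finset.prod_range_one, hfc Y hY, hec Y hY]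
    _ = 1 := binom_sum S (p 0)

/-- `P_{r,𝔭}` is a probability function on `Ω_n^r`:
`Σ_{Y ∈ Ω_n^r} P_{r,𝔭}(Y) = 1`. -/
theorem Pfun_sum_eq_one (n r : ℕ) (p : ℕ → ℝ)
    (hp : ∀ i, i ≤ r → 0 ≤ p i ∧ p i ≤ 1) :
    ∑ Y ∈ Omega n r, Pfun r p Y = 1 := by
  clear hp
  induction r with
  | zero => exact sum_Omega_zero n p
  | succ r ih =>
      have step : ∑ Y ∈ Omega n (r + 1), Pfun (r + 1) p Y =
          ∑ x ∈ (Omega n r).sigma (fun Z => (elig r Z).powerset),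
            Pfun (r + 1) p (x.1 ∪ x.2) := by
        refine Finset.sum_nbij'
          (fun Y => ⟨Y.filter (fun σ => σ.card ≤ r + 1),
                     Y.filter (fun σ => σ.card = r + 2)⟩)
          (fun x => x.1 ∪ x.2) ?_ ?_ ?_ ?_ ?_
        · intro Y hY
          exact Finset.mem_sigma.mpr ⟨skel_mem_Omega hY,
            mem_powerset.mpr (top_subset_elig hY)⟩
        · intro x hx
          obtain ⟨h1, h2⟩ := Finset.mem_sigma.mp hx
          exact union_mem_Omega h1 (mem_powerset.mp h2)
        · intro Y hY
          exact skel_union_top hY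
        · intro x hx
          obtain ⟨h1, h2⟩ := Finset.mem_sigma.mp hx
          have hT := mem_powerset.mp h2
          exact Sigma.ext (skel_union h1 hT) (heq_of_eq (top_union h1 hT))
        · intro Y hY
          rw [skel_union_top hY]
      rw [step, Finset.sum_sigma]
      calc ∑ Z ∈ Omega n r, ∑ T ∈ (elig r Z).powerset, Pfun (r + 1) p (Z ∪ T)
          = ∑ Z ∈ Omega n r, Pfun r p Z * 1 := by
            refine sum_congr rfl fun Z hZ => ?_
            have hZ' : Z ∈ Omega n r := hZ
            rw [Finset.sum_congr rfl (fun T hT => Pfun_union p hZ' (mem_powerset.mp hT)),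
              ← Finset.mul_sum, binom_sum (elig r Z) (p (r + 1))]
        _ = 1 := by simp only [mul_one]; exact ih
end
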